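/- Consider a run of the preemptive greedy algorithm with parameter β > 0 on a finite simple graph G whose vertex enumeration v_1, …, v_n is an inductively k-independent ordering (k ≥ 1), with a monotone, normalized, submodular function f, producing the output set S_n. Then S_n is an independent set of G, and every independent set T of G satisfies f(T) ≤ (k(1+β) + 1)(1 + 1/β) · f(S_n). -/

import Mathlib

open Finset

/-- A set of vertices is independent if no two of its vertices are adjacent. -/
def IsIndep {n : ℕ} (G : SimpleGraph (Fin n)) (S : Finset (Fin n)) : Prop :=
  ∀ u ∈ S, ∀ v ∈ S, ¬ G.Adj u v

/-- `A_i`: the neighbors of `v_i` that come after `v_i` in the ordering. -/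
def laterNbrs {n : ℕ} (G : SimpleGraph (Fin n)) [DecidableRel G.Adj] (i : Fin n) :
    Finset (Fin n) :=
  Finset.univ.filter (fun j => G.Adj i j ∧ i < j)

/-- `B_i`: the neighbors of `v_i` that come before `v_i` in the ordering. -/
def earlierNbrs {n : ℕ} (G : SimpleGraph (Fin n)) [DecidableRel G.Adj] (i : Fin n) :
    Finset (Fin n) :=
  Finset.univ.filter (fun j => G.Adj i j ∧ j < i)

/-- The enumeration of `Fin n` (in its natural order) is an inductively `k`-independent
ordering of `G`. -/
def InductivelyKIndep {n : ℕ} (G : SimpleGraph (Fin n)) [DecidableRel G.Adj] (k : ℕ) : Prop :=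
  ∀ i : Fin n, ∀ S ⊆ laterNbrs G i, IsIndep G S → S.card ≤ k

/-- A set function is submodular. -/
def Submodular {V : Type*} [DecidableEq V] (f : Finset V → ℝ) : Prop :=
  ∀ A B : Finset V, f (A ∪ B) + f (A ∩ B) ≤ f A + f B

/-- The incremental value `ν_f(S, e) = f(S' ∪ {e}) - f(S')` where `S' = {s ∈ S : s < e}`. -/
def incv {V : Type*} [LinearOrder V] (f : Finset V → ℝ) (S : Finset V) (e : V) : ℝ :=
  f (insert e (S.filter (fun s => s < e))) - f (S.filter (fun s => s < e))

/-- The conflict set `C_i = N(v_i) ∩ S` of vertex `i` against the current set `S`. -/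
def conflictSet {n : ℕ} (G : SimpleGraph (Fin n)) [DecidableRel G.Adj] (i : Fin n)
    (S : Finset (Fin n)) : Finset (Fin n) :=
  S.filter (fun u => G.Adj i u)

/-- Step `i` of the preemptive greedy algorithm with parameter `β` is accepted:
`f_{S_{i-1}}(v_i) ≥ (1+β) ∑_{c ∈ C_i} ν_f(S_{i-1}, c)`, where `S_{i-1} = S i.val`. -/
def AcceptedStep {n : ℕ} (G : SimpleGraph (Fin n)) [DecidableRel G.Adj]
    (f : Finset (Fin n) → ℝ) (β : ℝ) (S : ℕ → Finset (Fin n)) (i : Fin n) : Prop :=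
  (1 + β) * ∑ c ∈ conflictSet G i (S i.val), incv f (S i.val) c ≤
    f (insert i (S i.val)) - f (S i.val)

/-- `S : ℕ → Finset (Fin n)` is a run of the preemptive greedy algorithm with parameter `β`:
`S 0 = ∅`, and at each step `i` the vertex `v_i` is accepted (replacing its conflict set) iff
its marginal value is at least `(1+β)` times the total incremental value of its conflicts. -/
def IsGreedyRun {n : ℕ} (G : SimpleGraph (Fin n)) [DecidableRel G.Adj]
    (f : Finset (Fin n) → ℝ) (β : ℝ) (S : ℕ → Finset (Fin n)) : Prop :=
  S 0 = ∅ ∧ ∀ i : Fin n,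
    (AcceptedStep G f β S i →
      S (i.val + 1) = (S i.val \ conflictSet G i (S i.val)) ∪ {i}) ∧
    (¬ AcceptedStep G f β S i → S (i.val + 1) = S i.val)

/-- `U`: the set of all elements ever (even momentarily) added to the current set. -/
def everAdded {n : ℕ} (S : ℕ → Finset (Fin n)) : Finset (Fin n) :=
  (Finset.range (n + 1)).biUnion S

section AuxSubmodular

variable {V : Type*} [DecidableEq V] {f : Finset V → ℝ}

lemma marg (hsub : Submodular f) {A B : Finset V} (hAB : A ⊆ B) {c : V} (hc : c ∉ B) :
    f (insert c B) - f B ≤ f (insert c A) - f A := by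
  have h := hsub (insert c A) B
  have h1 : insert c A ∪ B = insert c B := by
    rw [insert_union, union_eq_right.2 hAB]
  have h2 : insert c A ∩ B = A := by
    ext x
    simp only [mem_inter, mem_insert]
    constructor
    · rintro ⟨rfl | hx, hxB⟩
      · exact absurd hxB hc
      · exact hx
    · intro hx
      exact ⟨Or.inr hx, hAB hx⟩
  rw [h1, h2] at h
  linarith

lemma f_union_le (hsub : Submodular f) :
    ∀ (B A : Finset V), f (A ∪ B) ≤ f A + ∑ b ∈ B \ A, (f (insert b A) - f A) := by
  intro B
  induction B using Finset.induction_on with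
  | empty => intro A; simp
  | @insert b B hbB ih =>
    intro A
    by_cases hbA : b ∈ A
    · have h1 : A ∪ insert b B = A ∪ B := by
        rw [union_insert, insert_eq_self.2 (mem_union_left B hbA)]
      have h2 : insert b B \ A = B \ A := insert_sdiff_of_mem _ hbA
      rw [h1, h2]; exact ih A
    · have h1 : A ∪ insert b B = insert b (A ∪ B) := by rw [union_insert]
      have h2 : insert b B \ A = insert b (B \ A) := insert_sdiff_of_notMem _ hbA
      have hbAB : b ∉ A ∪ B := by simp [hbA, hbB]
      have h3 := marg hsub (subset_union_left : A ⊆ A ∪ B) hbAB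
      have h4 : b ∉ B \ A := by simp [hbB]
      rw [h1, h2, sum_insert h4]
      have h5 := ih A
      linarith

end AuxSubmodular

section AuxIncv

variable {n : ℕ} {f : Finset (Fin n) → ℝ}

lemma incv_def' (f : Finset (Fin n) → ℝ) (S : Finset (Fin n)) (e : Fin n) :
    incv f S e = f (insert e (S.filter (fun s => s < e))) - f (S.filter (fun s => s < e)) := by
  unfold incv
  rfl

lemma incv_nonneg (hmono : ∀ A B : Finset (Fin n), A ⊆ B → f A ≤ f B)
    (T : Finset (Fin n)) (c : Fin n) : 0 ≤ incv f T c := by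
  rw [incv_def']
  exact sub_nonneg.2 (hmono _ _ (subset_insert _ _))

lemma incv_le_incv (hsub : Submodular f) {A B : Finset (Fin n)} {c : Fin n}
    (h : A.filter (fun s => s < c) ⊆ B.filter (fun s => s < c)) :
    incv f B c ≤ incv f A c := by
  rw [incv_def', incv_def']
  exact marg hsub h (by simp [mem_filter])

lemma sum_incv (hnorm : f ∅ = 0) : ∀ T : Finset (Fin n), ∑ c ∈ T, incv f T c = f T := by
  intro T
  induction T using Finset.strongInduction with
  | _ T ih =>
    rcases T.eq_empty_or_nonempty with rfl | hne
    · simpa using hnorm.symm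
    · have hc : T.max' hne ∈ T := T.max'_mem hne
      set c := T.max' hne with hcdef
      have hfilter : T.filter (fun s => s < c) = T.erase c := by
        ext x
        simp only [mem_filter, mem_erase]
        constructor
        · rintro ⟨hx, hlt⟩; exact ⟨ne_of_lt hlt, hx⟩
        · rintro ⟨hne', hx⟩; exact ⟨hx, lt_of_le_of_ne (T.le_max' x hx) hne'⟩
      have h2 : ∀ x ∈ T.erase c, incv f T x = incv f (T.erase c) x := by
        intro x hx
        have hxc : ¬ c < x := not_lt.2 (T.le_max' x (mem_of_mem_erase hx))
        rw [incv_def', incv_def', filter_erase, erase_eq_of_notMem (by simp [hxc])]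
      rw [← Finset.add_sum_erase _ _ hc, Finset.sum_congr rfl h2, ih _ (erase_ssubset hc),
        incv_def', hfilter, insert_erase hc]
      ring

end AuxIncv
section AuxRun

variable {n : ℕ} {G : SimpleGraph (Fin n)} [DecidableRel G.Adj]
  {f : Finset (Fin n) → ℝ} {β : ℝ} {S : ℕ → Finset (Fin n)}

lemma run_step (hrun : IsGreedyRun G f β S) (i : Fin n) :
    (AcceptedStep G f β S i ∧
      S (i.val + 1) = (S i.val \ conflictSet G i (S i.val)) ∪ {i}) ∨
    (¬ AcceptedStep G f β S i ∧ S (i.val + 1) = S i.val) := by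
  by_cases h : AcceptedStep G f β S i
  · exact Or.inl ⟨h, (hrun.2 i).1 h⟩
  · exact Or.inr ⟨h, (hrun.2 i).2 h⟩

lemma run_mem_lt (hrun : IsGreedyRun G f β S) :
    ∀ m, m ≤ n → ∀ c ∈ S m, (c : ℕ) < m := by
  intro m
  induction m with
  | zero =>
    intro _ c hc
    rw [hrun.1] at hc
    exact absurd hc (notMem_empty c)
  | succ m ih =>
    intro hm c hc
    have hm' : m < n := Nat.lt_of_succ_le hm
    rcases run_step hrun ⟨m, hm'⟩ with ⟨_, he⟩ | ⟨_, he⟩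
    · rw [he] at hc
      rcases mem_union.1 hc with h | h
      · exact Nat.lt_succ_of_lt (ih hm'.le c (mem_sdiff.1 h).1)
      · have : c = ⟨m, hm'⟩ := mem_singleton.1 h
        subst this
        exact Nat.lt_succ_self m
    · rw [he] at hc
      exact Nat.lt_succ_of_lt (ih hm'.le c hc)

lemma run_not_mem_self (hrun : IsGreedyRun G f β S) (i : Fin n) : i ∉ S i.val :=
  fun h => absurd (run_mem_lt hrun i.val i.isLt.le i h) (lt_irrefl _)

lemma run_mem_back (hrun : IsGreedyRun G f β S) :
    ∀ m' m, m ≤ m' → m' ≤ n → ∀ c : Fin n, (c : ℕ) < m → c ∈ S m' → c ∈ S m := by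
  intro m'
  induction m' with
  | zero =>
    intro m hm _ c _ hc
    obtain rfl : m = 0 := Nat.le_zero.1 hm
    exact hc
  | succ m' ih =>
    intro m hm hn c hcm hc
    rcases Nat.eq_or_lt_of_le hm with rfl | h'
    · exact hc
    · have hmm' : m ≤ m' := Nat.lt_succ_iff.1 h'
      have hm'n : m' < n := Nat.lt_of_succ_le hn
      apply ih m hmm' hm'n.le c hcm
      rcases run_step hrun ⟨m', hm'n⟩ with ⟨_, he⟩ | ⟨_, he⟩
      · rw [he] at hc
        rcases mem_union.1 hc with h | h
        · exact (mem_sdiff.1 h).1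
        · exfalso
          have : c = ⟨m', hm'n⟩ := mem_singleton.1 h
          subst this
          exact absurd (lt_of_lt_of_le hcm hmm') (lt_irrefl _)
      · rwa [he] at hc

lemma run_indep (hrun : IsGreedyRun G f β S) : ∀ m, m ≤ n → IsIndep G (S m) := by
  intro m
  induction m with
  | zero =>
    intro _
    rw [hrun.1]
    intro u hu
    exact absurd hu (notMem_empty u)
  | succ m ih =>
    intro hm
    have hm' : m < n := Nat.lt_of_succ_le hm
    rcases run_step hrun ⟨m, hm'⟩ with ⟨_, he⟩ | ⟨_, he⟩
    · rw [he]
      intro u hu v hv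
      rcases mem_union.1 hu with hu | hu <;> rcases mem_union.1 hv with hv | hv
      · exact ih hm'.le u (mem_sdiff.1 hu).1 v (mem_sdiff.1 hv).1
      · obtain rfl : v = ⟨m, hm'⟩ := mem_singleton.1 hv
        intro hadj
        exact (mem_sdiff.1 hu).2 (mem_filter.2 ⟨(mem_sdiff.1 hu).1, hadj.symm⟩)
      · obtain rfl : u = ⟨m, hm'⟩ := mem_singleton.1 hu
        intro hadj
        exact (mem_sdiff.1 hv).2 (mem_filter.2 ⟨(mem_sdiff.1 hv).1, hadj⟩)
      · obtain rfl : u = ⟨m, hm'⟩ := mem_singleton.1 hu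
        obtain rfl : v = ⟨m, hm'⟩ := mem_singleton.1 hv
        exact G.irrefl
    · rw [he]
      exact ih hm'.le

lemma run_incv_mono (hrun : IsGreedyRun G f β S) (hsub : Submodular f)
    {m m' : ℕ} (h : m ≤ m') (hn : m' ≤ n) {c : Fin n} (hcm : (c : ℕ) < m) :
    incv f (S m) c ≤ incv f (S m') c := by
  refine incv_le_incv (A := S m') (B := S m) hsub ?_
  intro x hx
  rcases mem_filter.1 hx with ⟨hxS, hxc⟩
  refine mem_filter.2 ⟨?_, hxc⟩
  exact run_mem_back hrun m' m h hn x (lt_trans (Fin.lt_def.1 hxc) hcm) hxS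

lemma run_exists_evict {c : Fin n} :
    ∀ b a : ℕ, a ≤ b → c ∈ S a → c ∉ S b →
      ∃ j, a ≤ j ∧ j < b ∧ c ∈ S j ∧ c ∉ S (j + 1) := by
  intro b
  induction b with
  | zero =>
    intro a ha hca hcb
    obtain rfl : a = 0 := Nat.le_zero.1 ha
    exact absurd hca hcb
  | succ b ih =>
    intro a ha hca hcb
    by_cases hb : c ∈ S b
    · have hab : a ≤ b := by
        rcases Nat.eq_or_lt_of_le ha with rfl | h
        · exact absurd hca hcb
        · exact Nat.lt_succ_iff.1 h
      exact ⟨b, hab, Nat.lt_succ_self b, hb, hcb⟩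
    · have hab : a ≤ b := by
        rcases Nat.eq_or_lt_of_le ha with rfl | h
        · exact absurd hca hcb
        · exact Nat.lt_succ_iff.1 h
      obtain ⟨j, h1, h2, h3, h4⟩ := ih a hab hca hb
      exact ⟨j, h1, Nat.lt_succ_of_lt h2, h3, h4⟩

lemma run_acc_iff (hrun : IsGreedyRun G f β S) (i : Fin n) :
    AcceptedStep G f β S i ↔ i ∈ S (i.val + 1) := by
  constructor
  · intro h
    rw [(hrun.2 i).1 h]
    exact mem_union_right _ (mem_singleton_self i)
  · intro h
    by_contra hacc
    rw [(hrun.2 i).2 hacc] at h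
    exact run_not_mem_self hrun i h

lemma run_filter_next (hrun : IsGreedyRun G f β S) {i : Fin n}
    (hacc : AcceptedStep G f β S i) :
    (S (i.val + 1)).filter (fun s => s < i) = S i.val \ conflictSet G i (S i.val) := by
  rw [(hrun.2 i).1 hacc]
  ext x
  simp only [mem_filter, mem_union, mem_singleton, mem_sdiff]
  constructor
  · rintro ⟨hx | rfl, hlt⟩
    · exact hx
    · exact absurd hlt (lt_irrefl x)
  · intro hx
    refine ⟨Or.inl hx, ?_⟩
    exact Fin.lt_def.2 (run_mem_lt hrun i.val i.isLt.le x hx.1)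

lemma run_accept_w (hrun : IsGreedyRun G f β S) (hsub : Submodular f) {i : Fin n}
    (hacc : AcceptedStep G f β S i) :
    (1 + β) * ∑ c ∈ conflictSet G i (S i.val), incv f (S i.val) c ≤
      incv f (S (i.val + 1)) i := by
  have key : incv f (S (i.val + 1)) i =
      f (insert i (S i.val \ conflictSet G i (S i.val))) -
        f (S i.val \ conflictSet G i (S i.val)) := by
    rw [incv_def', run_filter_next hrun hacc]
  rw [key]
  exact le_trans hacc (marg hsub sdiff_subset (run_not_mem_self hrun i))

lemma run_evicted_eq (hrun : IsGreedyRun G f β S) {i : Fin n}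
    (hacc : AcceptedStep G f β S i) :
    S i.val \ S (i.val + 1) = conflictSet G i (S i.val) := by
  rw [(hrun.2 i).1 hacc]
  ext x
  by_cases hxi : x = i
  · subst hxi
    simp [run_not_mem_self hrun x, conflictSet]
  · simp only [mem_sdiff, mem_union, mem_singleton, conflictSet, mem_filter, hxi, or_false]
    tauto

end AuxRun
/-- Approximation guarantee of preemptive greedy: the output `S_n` is an independent set of
`G`, and every independent set `T` satisfies `f(T) ≤ (k(1+β) + 1)(1 + 1/β) f(S_n)`. -/
theorem preemptive_greedy_guarantee {n k : ℕ} (hk : 1 ≤ k)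
    (G : SimpleGraph (Fin n)) [DecidableRel G.Adj]
    (hG : InductivelyKIndep G k)
    (f : Finset (Fin n) → ℝ) (hsub : Submodular f)
    (hmono : ∀ A B : Finset (Fin n), A ⊆ B → f A ≤ f B) (hnorm : f ∅ = 0)
    (β : ℝ) (hβ : 0 < β)
    (S : ℕ → Finset (Fin n)) (hrun : IsGreedyRun G f β S) :
    IsIndep G (S n) ∧
    ∀ T : Finset (Fin n), IsIndep G T →
      f T ≤ (k * (1 + β) + 1) * (1 + 1 / β) * f (S n) := by
  refine ⟨run_indep hrun n le_rfl, ?_⟩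
  intro T hT
  -- the set of accepted (ever added) vertices
  set A : Finset (Fin n) := univ.filter (fun i => i ∈ S (i.val + 1)) with hAdef
  -- the weight of an accepted vertex: its incremental value right after insertion
  set w : Fin n → ℝ := fun i => incv f (S (i.val + 1)) i with hwdef
  -- the pre-eviction value collector
  set M' : Fin n → ℝ := fun c =>
    ∑ j : Fin n, (if c ∈ S j.val \ S (j.val + 1) then incv f (S j.val) c else 0) with hM'def
  set M : Fin n → ℝ := fun c => M' c + (if c ∈ S n then incv f (S n) c else 0) with hMdef
  set E : ℝ := ∑ j : Fin n, ∑ c ∈ S j.val \ S (j.val + 1), incv f (S j.val) c with hEdef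
  have haccA : ∀ i : Fin n, i ∈ A ↔ AcceptedStep G f β S i := by
    intro i
    rw [hAdef, mem_filter]
    simp only [mem_univ, true_and]
    exact (run_acc_iff hrun i).symm
  have hSmA : ∀ m, m ≤ n → S m ⊆ A := by
    intro m hm c hc
    have hlt := run_mem_lt hrun m hm c hc
    have hc1 : c ∈ S (c.val + 1) :=
      run_mem_back hrun m (c.val + 1) (Nat.succ_le_of_lt hlt) hm c (Nat.lt_succ_self _) hc
    rw [hAdef, mem_filter]
    exact ⟨mem_univ c, hc1⟩
  have hSnA : S n ⊆ A := hSmA n le_rfl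
  have hwnn : ∀ i, 0 ≤ w i := fun i => incv_nonneg hmono _ _
  have hM'nn : ∀ c, 0 ≤ M' c := by
    intro c
    simp only [hM'def]
    refine Finset.sum_nonneg fun j _ => ?_
    split
    · exact incv_nonneg hmono _ _
    · exact le_rfl
  have hite : ∀ c j' : Fin n,
      (0:ℝ) ≤ if c ∈ S j'.val \ S (j'.val + 1) then incv f (S j'.val) c else 0 := by
    intro c j'
    split
    · exact incv_nonneg hmono _ _
    · exact le_rfl
  have hMnn : ∀ c, 0 ≤ M c := by
    intro c
    simp only [hMdef]
    have : (0:ℝ) ≤ (if c ∈ S n then incv f (S n) c else 0) := by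
      split
      · exact incv_nonneg hmono _ _
      · exact le_rfl
    have h2 := hM'nn c
    linarith
  -- (1+β) E ≤ ∑_{i ∈ A} w i
  have hE1 : (1 + β) * E ≤ ∑ i ∈ A, w i := by
    have hrw : ∑ i ∈ A, w i = ∑ i : Fin n, (if i ∈ A then w i else 0) := by
      rw [sum_ite_mem, univ_inter]
    rw [hrw, hEdef, mul_sum]
    refine Finset.sum_le_sum fun i _ => ?_
    by_cases hi : i ∈ A
    · rw [if_pos hi, run_evicted_eq hrun ((haccA i).1 hi)]
      exact run_accept_w hrun hsub ((haccA i).1 hi)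
    · rw [if_neg hi]
      have hnacc : ¬ AcceptedStep G f β S i := fun h => hi ((haccA i).2 h)
      rw [(hrun.2 i).2 hnacc, sdiff_self]
      simp
  -- ∑ M' = E
  have hsumM' : ∑ c : Fin n, M' c = E := by
    simp only [hM'def, hEdef]
    rw [Finset.sum_comm]
    refine Finset.sum_congr rfl fun j _ => ?_
    rw [sum_ite_mem, univ_inter]
  -- ∑_{i ∈ A} w i ≤ f (S n) + E
  have hAsum : ∑ i ∈ A, w i ≤ f (S n) + E := by
    have hsplit : ∑ i ∈ A \ S n, w i + ∑ i ∈ S n, w i = ∑ i ∈ A, w i := sum_sdiff hSnA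
    have h1 : ∑ i ∈ S n, w i ≤ f (S n) := by
      rw [← sum_incv hnorm (S n)]
      refine Finset.sum_le_sum fun i hi => ?_
      exact run_incv_mono hrun hsub i.isLt le_rfl (Nat.lt_succ_self _)
    have h2 : ∑ i ∈ A \ S n, w i ≤ E := by
      have h21 : ∑ i ∈ A \ S n, w i ≤ ∑ i ∈ A \ S n, M' i := by
        refine Finset.sum_le_sum fun i hi => ?_
        rcases mem_sdiff.1 hi with ⟨hiA, hiSn⟩
        have hiS : i ∈ S (i.val + 1) := by
          rw [hAdef, mem_filter] at hiA
          exact hiA.2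
        obtain ⟨j, hj1, hj2, hj3, hj4⟩ :=
          run_exists_evict (S := S) n (i.val + 1) i.isLt hiS hiSn
        have hle : w i ≤ incv f (S j) i :=
          run_incv_mono hrun hsub hj1 hj2.le (Nat.lt_succ_self _)
        refine le_trans hle ?_
        simp only [hM'def]
        have hsingle := Finset.single_le_sum
          (f := fun j' : Fin n => if i ∈ S j'.val \ S (j'.val + 1) then incv f (S j'.val) i else 0)
          (fun j' _ => hite i j')
          (mem_univ (⟨j, hj2⟩ : Fin n))
        simpa [mem_sdiff.2 ⟨hj3, hj4⟩] using hsingle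
      have h22 : ∑ i ∈ A \ S n, M' i ≤ ∑ c : Fin n, M' c :=
        Finset.sum_le_sum_of_subset_of_nonneg (subset_univ _) fun c _ _ => hM'nn c
      calc ∑ i ∈ A \ S n, w i ≤ ∑ i ∈ A \ S n, M' i := h21
        _ ≤ ∑ c : Fin n, M' c := h22
        _ = E := hsumM'
    linarith
  have hEnn : 0 ≤ E := by
    rw [← hsumM']
    exact Finset.sum_nonneg fun c _ => hM'nn c
  have hfSn0 : 0 ≤ f (S n) := by
    have := hmono ∅ (S n) (empty_subset _)
    linarith [hnorm ▸ this]
  have hEb : E ≤ f (S n) / β := by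
    rw [le_div_iff₀ hβ]
    nlinarith
  have hAwb : ∑ i ∈ A, w i ≤ f (S n) + f (S n) / β := by linarith
  -- f A ≤ ∑_{i ∈ A} w i
  have hfA : f A ≤ ∑ i ∈ A, w i := by
    rw [← sum_incv hnorm A]
    refine Finset.sum_le_sum fun u hu => ?_
    refine incv_le_incv hsub ?_
    intro x hx
    rcases mem_filter.1 hx with ⟨hx1, hx2⟩
    refine mem_filter.2 ⟨?_, hx2⟩
    have hxu : (x : ℕ) < u.val := Fin.lt_def.1 hx2
    have hx3 : x ∈ S (x.val + 1) :=
      run_mem_back hrun (u.val + 1) (x.val + 1) (Nat.succ_le_succ hxu.le) u.isLt x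
        (Nat.lt_succ_self _) hx1
    rw [hAdef, mem_filter]
    exact ⟨mem_univ x, hx3⟩
  -- total M bound
  have hMsum : ∑ c : Fin n, M c ≤ f (S n) / β + f (S n) := by
    have h1 : ∑ c : Fin n, M c = E + ∑ c ∈ S n, incv f (S n) c := by
      simp only [hMdef]
      rw [Finset.sum_add_distrib, hsumM', sum_ite_mem, univ_inter]
    rw [h1, sum_incv hnorm (S n)]
    linarith
  -- rejected elements: marginal w.r.t. A bounded by conflicts' M-values
  have hrej : ∀ t : Fin n, t ∉ A →
      f (insert t A) - f A ≤ (1 + β) * ∑ c ∈ conflictSet G t (S t.val), M c := by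
    intro t htA
    have hnacc : ¬ AcceptedStep G f β S t := fun h => htA ((haccA t).2 h)
    have h1 : f (insert t A) - f A ≤ f (insert t (S t.val)) - f (S t.val) :=
      marg hsub (hSmA t.val t.isLt.le) htA
    have h2 : f (insert t (S t.val)) - f (S t.val) <
        (1 + β) * ∑ c ∈ conflictSet G t (S t.val), incv f (S t.val) c := not_le.1 hnacc
    have h3 : ∑ c ∈ conflictSet G t (S t.val), incv f (S t.val) c ≤
        ∑ c ∈ conflictSet G t (S t.val), M c := by
      refine Finset.sum_le_sum fun c hc => ?_
      have hcS : c ∈ S t.val := (mem_filter.1 hc).1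
      have hclt : (c : ℕ) < t.val := run_mem_lt hrun t.val t.isLt.le c hcS
      by_cases hcSn : c ∈ S n
      · have hle : incv f (S t.val) c ≤ incv f (S n) c :=
          run_incv_mono hrun hsub t.isLt.le le_rfl hclt
        simp only [hMdef, if_pos hcSn]
        linarith [hM'nn c]
      · obtain ⟨j, hj1, hj2, hj3, hj4⟩ :=
          run_exists_evict (S := S) n t.val t.isLt.le hcS hcSn
        have hle : incv f (S t.val) c ≤ incv f (S j) c :=
          run_incv_mono hrun hsub hj1 hj2.le hclt
        have hle2 : incv f (S j) c ≤ M' c := by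
          simp only [hM'def]
          have hsingle := Finset.single_le_sum
            (f := fun j' : Fin n =>
              if c ∈ S j'.val \ S (j'.val + 1) then incv f (S j'.val) c else 0)
            (fun j' _ => hite c j')
            (mem_univ (⟨j, hj2⟩ : Fin n))
          simpa [mem_sdiff.2 ⟨hj3, hj4⟩] using hsingle
        simp only [hMdef, if_neg hcSn]
        linarith
    have hβ1 : (0:ℝ) ≤ 1 + β := by linarith
    nlinarith [mul_le_mul_of_nonneg_left h3 hβ1]
  -- counting: each c is charged at most k times
  have hcount : ∀ c : Fin n,
      (((T \ A).filter (fun t => c ∈ conflictSet G t (S t.val))).card : ℝ) ≤ (k : ℝ) := by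
    intro c
    have hsubset : (T \ A).filter (fun t => c ∈ conflictSet G t (S t.val)) ⊆ laterNbrs G c := by
      intro t ht
      rcases mem_filter.1 ht with ⟨_, htc⟩
      rcases mem_filter.1 htc with ⟨hcS, hadj⟩
      refine mem_filter.2 ⟨mem_univ t, hadj.symm, ?_⟩
      exact Fin.lt_def.2 (run_mem_lt hrun t.val t.isLt.le c hcS)
    have hindep : IsIndep G ((T \ A).filter (fun t => c ∈ conflictSet G t (S t.val))) := by
      intro u hu v hv
      exact hT u (mem_sdiff.1 (mem_filter.1 hu).1).1 v (mem_sdiff.1 (mem_filter.1 hv).1).1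
    exact_mod_cast hG c _ hsubset hindep
  -- the double sum over rejected elements is at most k * ∑ M
  have hbig : ∑ t ∈ T \ A, ∑ c ∈ conflictSet G t (S t.val), M c ≤
      (k : ℝ) * ∑ c : Fin n, M c := by
    have hrw : ∀ t : Fin n, ∑ c ∈ conflictSet G t (S t.val), M c =
        ∑ c : Fin n, (if c ∈ conflictSet G t (S t.val) then M c else 0) := by
      intro t
      rw [sum_ite_mem, univ_inter]
    rw [Finset.sum_congr rfl fun t _ => hrw t, Finset.sum_comm]
    have hper : ∀ c : Fin n,
        ∑ t ∈ T \ A, (if c ∈ conflictSet G t (S t.val) then M c else 0) ≤ (k : ℝ) * M c := by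
      intro c
      rw [← Finset.sum_filter]
      rw [Finset.sum_const, nsmul_eq_mul]
      exact mul_le_mul_of_nonneg_right (hcount c) (hMnn c)
    calc ∑ c : Fin n, ∑ t ∈ T \ A, (if c ∈ conflictSet G t (S t.val) then M c else 0)
        ≤ ∑ c : Fin n, (k : ℝ) * M c := Finset.sum_le_sum fun c _ => hper c
      _ = (k : ℝ) * ∑ c : Fin n, M c := by rw [mul_sum]
  -- final assembly
  have hβ1 : (0:ℝ) ≤ 1 + β := by linarith
  have hk0 : (0:ℝ) ≤ (k : ℝ) := Nat.cast_nonneg k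
  calc f T ≤ f (A ∪ T) := hmono T (A ∪ T) subset_union_right
    _ ≤ f A + ∑ t ∈ T \ A, (f (insert t A) - f A) := f_union_le hsub T A
    _ ≤ f A + ∑ t ∈ T \ A, (1 + β) * ∑ c ∈ conflictSet G t (S t.val), M c := by
        refine add_le_add (le_refl _) (Finset.sum_le_sum fun t ht => ?_)
        exact hrej t (mem_sdiff.1 ht).2
    _ = f A + (1 + β) * ∑ t ∈ T \ A, ∑ c ∈ conflictSet G t (S t.val), M c := by
        rw [mul_sum]
    _ ≤ (f (S n) + f (S n) / β) + (1 + β) * ((k : ℝ) * (f (S n) / β + f (S n))) := by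
        have hA' : f A ≤ f (S n) + f (S n) / β := le_trans hfA hAwb
        have hB' : ∑ t ∈ T \ A, ∑ c ∈ conflictSet G t (S t.val), M c ≤
            (k : ℝ) * (f (S n) / β + f (S n)) :=
          le_trans hbig (mul_le_mul_of_nonneg_left hMsum hk0)
        have := mul_le_mul_of_nonneg_left hB' hβ1
        linarith
    _ = ((k : ℝ) * (1 + β) + 1) * (1 + 1 / β) * f (S n) := by
        field_simp
        ring
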